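/- For b ≥ 0 and q ≥ 1, the function h(x) = ∏_{i=1}^N (x_i² + b)·x_i^q defined on [0,∞)^N is Schur concave; i.e., if x majorizes y (both with nonnegative entries) then h(x) ≤ h(y). -/

import Mathlib

open Finset Real Set

private lemma aux_ne {b t : ℝ} (hb : 0 ≤ b) (ht : 0 < t) : t ^ 3 + b * t ≠ 0 := by positivity

private lemma concave_logcube (b : ℝ) (hb : 0 ≤ b) :
    ConcaveOn ℝ (Set.Ioi (0:ℝ)) (fun t => Real.log (t ^ 3 + b * t)) := by
  have hio : interior (Set.Ioi (0:ℝ)) = Set.Ioi 0 := interior_Ioi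
  set f : ℝ → ℝ := fun t => Real.log (t ^ 3 + b * t) with hf
  set g1 : ℝ → ℝ := fun t => (3 * t ^ 2 + b) / (t ^ 3 + b * t) with hg1
  have hpoly : ∀ t : ℝ, HasDerivAt (fun t : ℝ => t ^ 3 + b * t) (3 * t ^ 2 + b) t := by
    intro t
    have := (hasDerivAt_pow 3 t).add ((hasDerivAt_id t).const_mul b)
    refine this.congr_deriv ?_
    push_cast; ring
  have hd : ∀ t ∈ Set.Ioi (0:ℝ), HasDerivAt f (g1 t) t := by
    intro t ht
    exact (hpoly t).log (aux_ne hb ht)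
  have hderiv_eq : Set.EqOn (deriv f) g1 (Set.Ioi 0) := fun t ht => (hd t ht).deriv
  have hd2 : ∀ t ∈ Set.Ioi (0:ℝ),
      HasDerivAt g1 ((-3 * t ^ 4 - b ^ 2) / (t ^ 3 + b * t) ^ 2) t := by
    intro t ht
    have h1 : HasDerivAt (fun t : ℝ => 3 * t ^ 2 + b) (6 * t) t := by
      have := ((hasDerivAt_pow 2 t).const_mul 3).add_const b
      refine this.congr_deriv ?_
      push_cast; ring
    have := h1.div (hpoly t) (aux_ne hb ht)
    refine this.congr_deriv ?_
    congr 1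
    ring
  have hev : ∀ t ∈ Set.Ioi (0:ℝ), deriv f =ᶠ[nhds t] g1 := by
    intro t ht
    filter_upwards [isOpen_Ioi.mem_nhds ht] with s hs using hderiv_eq hs
  refine concaveOn_of_deriv2_nonpos (convex_Ioi 0) ?_ ?_ ?_ ?_
  · intro t ht
    exact (hd t ht).continuousAt.continuousWithinAt
  · intro t ht
    rw [hio] at ht
    exact ((hd t ht).differentiableAt).differentiableWithinAt
  · intro t ht
    rw [hio] at ht
    exact (((hd2 t ht).differentiableAt).congr_of_eventuallyEq
      (hev t ht)).differentiableWithinAt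
  · intro t ht
    rw [hio] at ht
    have h1 : deriv (deriv f) t = (-3 * t ^ 4 - b ^ 2) / (t ^ 3 + b * t) ^ 2 := by
      rw [(hev t ht).deriv_eq]
      exact (hd2 t ht).deriv
    simp only [Function.iterate_succ, Function.iterate_zero, Function.comp_apply, id_eq]
    rw [h1]
    have ht' : (0:ℝ) < t := ht
    apply div_nonpos_of_nonpos_of_nonneg
    · nlinarith [pow_nonneg (le_of_lt ht') 4, sq_nonneg b]
    · positivity

private lemma concave_full (b q : ℝ) (hb : 0 ≤ b) (hq : 1 ≤ q) :
    ConcaveOn ℝ (Set.Ioi (0:ℝ))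
      (fun t => (q - 1) * Real.log t + Real.log (t ^ 3 + b * t)) := by
  have h1 : ConcaveOn ℝ (Set.Ioi (0:ℝ)) (fun t => (q - 1) * Real.log t) := by
    have := (strictConcaveOn_log_Ioi.concaveOn).smul (c := q - 1) (by linarith)
    simpa [smul_eq_mul] using this
  exact h1.add (concave_logcube b hb)

private lemma exp_full {b q t : ℝ} (hb : 0 ≤ b) (ht : 0 < t) :
    Real.exp ((q - 1) * Real.log t + Real.log (t ^ 3 + b * t)) = (t ^ 2 + b) * t ^ q := by
  rw [Real.exp_add, Real.exp_log (by positivity), mul_comm (q - 1) (Real.log t),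
    ← Real.rpow_def_of_pos ht]
  have h2 : t ^ q = t ^ (q - 1) * t := by
    rw [← Real.rpow_add_one (ne_of_gt ht)]
    norm_num
  rw [h2]
  ring

open Finset in
/-- For `b ≥ 0` and `q ≥ 1`, the function `h(x) = ∏ i, (x i ^ 2 + b) * x i ^ q`
on `[0,∞)^N` is Schur concave: if `x` majorizes `y` (equivalently, `y` is the image
of `x` under a doubly stochastic matrix), then `h x ≤ h y`. -/
theorem schur_concave_h {N : ℕ} (b q : ℝ) (hb : 0 ≤ b) (hq : 1 ≤ q)
    (x y : Fin N → ℝ) (hx : ∀ i, 0 ≤ x i) (hy : ∀ i, 0 ≤ y i)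
    (hmaj : ∃ S ∈ doublyStochastic ℝ (Fin N), y = S.mulVec x) :
    ∏ i, (x i ^ 2 + b) * x i ^ q ≤ ∏ i, (y i ^ 2 + b) * y i ^ q := by
  obtain ⟨S, hS, hyx⟩ := hmaj
  have Snn : ∀ i j, 0 ≤ S i j := fun i j => nonneg_of_mem_doublyStochastic hS
  have hrow : ∀ i, ∑ j, S i j = 1 := sum_row_of_mem_doublyStochastic hS
  have hcol : ∀ j, ∑ i, S i j = 1 := sum_col_of_mem_doublyStochastic hS
  set g : ℝ → ℝ := fun t => (t ^ 2 + b) * t ^ q with hg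
  have hq0 : q ≠ 0 := by linarith
  have gnn : ∀ t : ℝ, 0 ≤ t → 0 ≤ g t := by
    intro t ht
    exact mul_nonneg (by positivity) (Real.rpow_nonneg ht q)
  have hyeq : ∀ i, y i = ∑ j, S i j * x j := by
    intro i
    rw [hyx]
    simp [Matrix.mulVec, dotProduct]
  -- key per-row inequality
  have key : ∀ i, ∏ j, g (x j) ^ S i j ≤ g (y i) := by
    intro i
    classical
    set T := Finset.univ.filter (fun j => S i j ≠ 0) with hT
    by_cases hzero : ∃ j ∈ T, x j = 0
    · obtain ⟨j0, hj0T, hj0⟩ := hzero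
      have hSj0 : S i j0 ≠ 0 := (Finset.mem_filter.mp hj0T).2
      have : g (x j0) ^ S i j0 = 0 := by
        rw [hg]
        simp only [hj0]
        rw [Real.zero_rpow hq0]
        rw [mul_zero, Real.zero_rpow hSj0]
      calc ∏ j, g (x j) ^ S i j = 0 := Finset.prod_eq_zero (Finset.mem_univ j0) this
        _ ≤ g (y i) := gnn _ (hy i)
    · push_neg at hzero
      have hxpos : ∀ j ∈ T, 0 < x j := fun j hj => lt_of_le_of_ne (hx j) (Ne.symm (hzero j hj))
      have hsumT : ∑ j ∈ T, S i j = 1 := by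
        rw [hT, Finset.sum_filter_of_ne (fun j _ h => h)]
        exact hrow i
      have hyT : y i = ∑ j ∈ T, S i j * x j := by
        rw [hyeq i, ← Finset.sum_filter_of_ne (p := fun j => S i j ≠ 0)
          (fun j _ h => fun hc => h (by rw [hc, zero_mul]))]
      have hTne : T.Nonempty := by
        by_contra h
        rw [Finset.not_nonempty_iff_eq_empty] at h
        rw [h, Finset.sum_empty] at hsumT
        norm_num at hsumT
      obtain ⟨j0, hj0⟩ := hTne
      have hypos : 0 < y i := by
        rw [hyT]
        apply Finset.sum_pos' (fun j hj => mul_nonneg (Snn i j) (hx j))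
        refine ⟨j0, hj0, ?_⟩
        exact mul_pos (lt_of_le_of_ne (Snn i j0) (Ne.symm (Finset.mem_filter.mp hj0).2))
          (hxpos j0 hj0)
      set f : ℝ → ℝ := fun t => (q - 1) * Real.log t + Real.log (t ^ 3 + b * t) with hfdef
      have hjensen := (concave_full b q hb hq).le_map_sum (t := T) (w := fun j => S i j)
        (p := x) (fun j _ => Snn i j) hsumT (fun j hj => hxpos j hj)
      simp only [smul_eq_mul] at hjensen
      have hsum_eq : ∑ j ∈ T, S i j * x j = y i := hyT.symm
      rw [hsum_eq] at hjensen
      have h1 : ∏ j, g (x j) ^ S i j = ∏ j ∈ T, g (x j) ^ S i j := by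
        symm
        apply Finset.prod_subset (Finset.filter_subset _ _)
        intro j _ hj
        have : S i j = 0 := by
          by_contra h
          exact hj (Finset.mem_filter.mpr ⟨Finset.mem_univ j, h⟩)
        rw [this, Real.rpow_zero]
      rw [h1]
      have h2 : ∏ j ∈ T, g (x j) ^ S i j = Real.exp (∑ j ∈ T, S i j * f (x j)) := by
        rw [Real.exp_sum]
        apply Finset.prod_congr rfl
        intro j hj
        rw [mul_comm (S i j) (f (x j)), Real.exp_mul, hfdef, exp_full hb (hxpos j hj)]
      rw [h2]
      calc Real.exp (∑ j ∈ T, S i j * f (x j)) ≤ Real.exp (f (y i)) :=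
            Real.exp_le_exp.mpr hjensen
        _ = g (y i) := by rw [hfdef, exp_full hb hypos]
  -- column identity
  have col : ∀ j, g (x j) = ∏ i, g (x j) ^ S i j := by
    intro j
    rcases eq_or_lt_of_le (gnn (x j) (hx j)) with h | h
    · have h0 : g (x j) = 0 := h.symm
      have : ∃ i0, S i0 j ≠ 0 := by
        by_contra hc
        push_neg at hc
        have := hcol j
        rw [Finset.sum_eq_zero (fun i _ => hc i)] at this
        norm_num at this
      obtain ⟨i0, hi0⟩ := this
      rw [h0]
      symm
      apply Finset.prod_eq_zero (Finset.mem_univ i0)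
      rw [Real.zero_rpow hi0]
    · rw [← Real.rpow_sum_of_pos h (fun i => S i j) Finset.univ, hcol j, Real.rpow_one]
  calc ∏ i, (x i ^ 2 + b) * x i ^ q = ∏ j, ∏ i, g (x j) ^ S i j := by
        apply Finset.prod_congr rfl
        intro j _
        exact col j
    _ = ∏ i, ∏ j, g (x j) ^ S i j := Finset.prod_comm
    _ ≤ ∏ i, (y i ^ 2 + b) * y i ^ q := by
        apply Finset.prod_le_prod
        · intro i _
          exact Finset.prod_nonneg fun j _ => Real.rpow_nonneg (gnn (x j) (hx j)) _
        · intro i _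
          exact key i
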